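/- Let p > 0 and let μ be a probability measure on ℝⁿ with barycenter at the origin, finite first moment, and 0 in the interior of conv(supp(μ)). Then the infimum of the functional I_{μ,p}(ψ) = ∫ ψ dμ + (∫_{ℝⁿ} (ψ*(x))^{-(n+p)} dx)^{-2/p}, taken over all μ-integrable proper convex functions ψ: ℝⁿ → ℝ ∪ {+∞} with ψ(0) < 0, is finite (greater than −∞). -/

import Mathlib

open MeasureTheory Filter
open scoped ENNReal RealInnerProductSpace

noncomputable section

abbrev En (n : ℕ) := EuclideanSpace ℝ (Fin n)

/-- Legendre transform of an `EReal`-valued function: `ψ*(y) = sup_{x ∈ dom ψ} (⟨x,y⟩ - ψ x)`. -/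
def legendre {n : ℕ} (ψ : En n → EReal) (y : En n) : EReal :=
  ⨆ x : {x : En n // ψ x < ⊤}, ((⟪x.1, y⟫ : ℝ) : EReal) - ψ x.1

/-- Convexity for `ℝ ∪ {+∞}`-valued functions. -/
def EConvexOn {n : ℕ} (ψ : En n → EReal) : Prop :=
  ∀ x y : En n, ∀ a b : ℝ, 0 ≤ a → 0 ≤ b → a + b = 1 →
    ψ (a • x + b • y) ≤ (a : EReal) * ψ x + (b : EReal) * ψ y

/-- `t ^ (-s)` with the conventions `0^(-s) = ∞`, `∞^(-s) = 0` (for `s > 0`). -/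
def negPow (t : EReal) (s : ℝ) : ℝ≥0∞ :=
  if t = ⊤ then 0 else if t ≤ 0 then ⊤ else ENNReal.ofReal (t.toReal ^ (-s))

/-- `I_p(ψ) = (∫ (ψ*)^{-(n+p)})^{-1/p} ∈ [0,∞]`. -/
def Ip (n : ℕ) (p : ℝ) (ψ : En n → EReal) : ℝ≥0∞ :=
  (∫⁻ x, negPow (legendre ψ x) ((n : ℝ) + p)) ^ (-(1 : ℝ) / p)

/-- The support of a Borel measure: points all of whose open neighborhoods have positive
measure. -/
def msupport {n : ℕ} (μ : Measure (En n)) : Set (En n) :=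
  {x | ∀ U : Set (En n), IsOpen U → x ∈ U → 0 < μ U}

/-- The functional `I_{μ,p}(ψ) = ∫ ψ dμ + (∫ (ψ*)^{-(n+p)})^{-2/p}`, with values in
`ℝ ∪ {±∞}`. -/
def Imup (n : ℕ) (p : ℝ) (μ : Measure (En n)) (ψ : En n → EReal) : EReal :=
  ((∫ x, (ψ x).toReal ∂μ : ℝ) : EReal) +
    (((∫⁻ x, negPow (legendre ψ x) ((n : ℝ) + p)) ^ (-(2 : ℝ) / p) : ℝ≥0∞) : EReal)

set_option maxHeartbeats 1000000 in
/-- Uniform mass in every direction, from `0 ∈ interior (conv (supp μ))`. -/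
theorem lemA {n : ℕ} (μ : Measure (En n)) [IsProbabilityMeasure μ]
    (h0 : (0 : En n) ∈ interior (convexHull ℝ (msupport μ))) :
    ∃ r δ : ℝ, 0 < r ∧ 0 < δ ∧ ∀ θ : En n, ‖θ‖ = 1 →
      ENNReal.ofReal δ ≤ μ {z | r ≤ ⟪z, θ⟫} := by
  obtain ⟨ε, hε, hball⟩ := Metric.mem_nhds_iff.mp (mem_interior_iff_mem_nhds.mp h0)
  set r : ℝ := ε / 4 with hr
  have hrpos : 0 < r := by positivity
  -- for each unit θ₀, a support point far in direction θ₀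
  have hsup : ∀ θ₀ : En n, ∃ x : En n, ‖θ₀‖ = 1 →
      x ∈ msupport μ ∧ 2 * r ≤ ⟪x, θ₀⟫ := by
    intro θ₀
    by_cases hθ : ‖θ₀‖ = 1
    · have hmem : (2 * r) • θ₀ ∈ convexHull ℝ (msupport μ) := by
        apply hball
        rw [Metric.mem_ball, dist_zero_right, norm_smul, hθ, mul_one,
          Real.norm_eq_abs, abs_of_pos (by positivity)]
        linarith
      by_contra hcon
      push_neg at hcon
      have hsub : convexHull ℝ (msupport μ) ⊆ {z : En n | ⟪z, θ₀⟫ < 2 * r} := by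
        apply convexHull_min
        · intro x hx
          exact (hcon x).2 hx
        · exact convex_halfSpace_lt
            ⟨fun a b => inner_add_left a b θ₀, fun c x => real_inner_smul_left x θ₀ c⟩ _
      have := hsub hmem
      rw [Set.mem_setOf_eq, real_inner_smul_left, real_inner_self_eq_norm_sq, hθ] at this
      nlinarith
    · exact ⟨0, fun h => absurd h hθ⟩
  choose xs hxs using hsup
  -- cover the sphere
  set S : Set (En n) := Metric.sphere (0 : En n) 1 with hS
  have hScompact : IsCompact S := isCompact_sphere 0 1
  have hmemS : ∀ θ : En n, θ ∈ S ↔ ‖θ‖ = 1 := by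
    intro θ; rw [hS, Metric.mem_sphere, dist_zero_right]
  set ρ : En n → ℝ := fun θ₀ => r / (2 * (‖xs θ₀‖ + 1)) with hρ
  have hρpos : ∀ θ₀, 0 < ρ θ₀ := by
    intro θ₀
    have : (0:ℝ) < ‖xs θ₀‖ + 1 := by positivity
    positivity
  obtain ⟨t, ht⟩ := hScompact.elim_finite_subcover
    (fun θ₀ : S => Metric.ball θ₀.1 (ρ θ₀.1)) (fun θ₀ => Metric.isOpen_ball)
    (fun θ hθ => Set.mem_iUnion.mpr ⟨⟨θ, hθ⟩, Metric.mem_ball_self (hρpos θ)⟩)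
  -- key: the ball around xs θ₀ is inside the halfspace for θ near θ₀
  have hkey : ∀ θ₀ ∈ S, ∀ θ ∈ Metric.ball θ₀ (ρ θ₀), ‖θ‖ = 1 →
      Metric.ball (xs θ₀) (r/2) ⊆ {z | r ≤ ⟪z, θ⟫} := by
    intro θ₀ hθ₀ θ hθball hθ z hz
    have hθ₀1 : ‖θ₀‖ = 1 := (hmemS θ₀).mp hθ₀
    obtain ⟨hxsupp, hxinner⟩ := hxs θ₀ hθ₀1
    have h1 : ⟪z, θ⟫ = ⟪xs θ₀, θ₀⟫ + ⟪z - xs θ₀, θ⟫ + ⟪xs θ₀, θ - θ₀⟫ := by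
      rw [inner_sub_left, inner_sub_right]; ring
    have h2 : |⟪z - xs θ₀, θ⟫| ≤ ‖z - xs θ₀‖ * ‖θ‖ := abs_real_inner_le_norm _ _
    have h3 : |⟪xs θ₀, θ - θ₀⟫| ≤ ‖xs θ₀‖ * ‖θ - θ₀‖ := abs_real_inner_le_norm _ _
    have hz' : ‖z - xs θ₀‖ < r / 2 := by
      rwa [Metric.mem_ball, dist_eq_norm] at hz
    have hθd : ‖θ - θ₀‖ < ρ θ₀ := by
      rwa [Metric.mem_ball, dist_eq_norm] at hθball
    have h4 : ‖xs θ₀‖ * ‖θ - θ₀‖ ≤ r / 2 := by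
      have h5 : ‖xs θ₀‖ * ‖θ - θ₀‖ ≤ ‖xs θ₀‖ * ρ θ₀ :=
        mul_le_mul_of_nonneg_left hθd.le (norm_nonneg _)
      have h6 : ‖xs θ₀‖ * ρ θ₀ ≤ r / 2 := by
        rw [hρ]
        have hpos : (0:ℝ) < ‖xs θ₀‖ + 1 := by positivity
        rw [mul_comm, div_mul_eq_mul_div, div_le_div_iff₀ (by positivity) two_pos]
        nlinarith [norm_nonneg (xs θ₀), hrpos.le]
      linarith
    rw [Set.mem_setOf_eq, h1]
    have := abs_le.mp h2
    have := abs_le.mp h3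
    rw [hθ, mul_one] at h2
    have h2' := (abs_le.mp h2).1
    have h3' := (abs_le.mp h3).1
    nlinarith
  -- define delta
  have hballpos : ∀ θ₀ : En n, ‖θ₀‖ = 1 → 0 < (μ (Metric.ball (xs θ₀) (r/2))).toReal := by
    intro θ₀ h1
    have h2 := ((hxs θ₀ h1).1) (Metric.ball (xs θ₀) (r/2)) Metric.isOpen_ball
      (Metric.mem_ball_self (by positivity))
    exact ENNReal.toReal_pos h2.ne' (measure_lt_top μ _).ne
  by_cases htne : t.Nonempty
  · refine ⟨r, t.inf' htne (fun i => (μ (Metric.ball (xs i.1) (r/2))).toReal), hrpos, ?_, ?_⟩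
    · rw [Finset.lt_inf'_iff]
      exact fun i _ => hballpos i.1 ((hmemS i.1).mp i.2)
    · intro θ hθ1
      obtain ⟨i, hit, hiball⟩ := Set.mem_iUnion₂.mp (ht ((hmemS θ).mpr hθ1))
      refine le_trans ?_ (measure_mono (hkey i.1 i.2 θ hiball hθ1))
      refine le_trans (ENNReal.ofReal_le_ofReal (Finset.inf'_le _ hit)) ?_
      rw [ENNReal.ofReal_toReal (measure_lt_top μ _).ne]
  · refine ⟨r, 1, hrpos, one_pos, ?_⟩
    intro θ hθ1
    exact absurd (Set.mem_iUnion₂.mp (ht ((hmemS θ).mpr hθ1)))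
      (by simp [Finset.not_nonempty_iff_eq_empty.mp htne])

/-- Fenchel's inequality for `legendre`. -/
theorem fenchel {n : ℕ} (ψ : En n → EReal) (x y : En n) (hx : ψ x < ⊤) :
    ((⟪x, y⟫ : ℝ) : EReal) - ψ x ≤ legendre ψ y :=
  le_iSup (fun z : {z : En n // ψ z < ⊤} => ((⟪z.1, y⟫ : ℝ) : EReal) - ψ z.1) ⟨x, hx⟩

/-- The final elementary real inequality. -/
theorem realfin {c m : ℝ} (hc : 0 < c) (hm : 1 ≤ m) :
    -1 - (2 / c) ^ 2 ≤ -m + m ^ ((3:ℝ)/2) * c := by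
  have hm0 : (0:ℝ) < m := by linarith
  have hterm : 0 ≤ m ^ ((3:ℝ)/2) * c := by positivity
  rcases le_or_gt m ((2/c)^2) with hc1 | hc1
  · nlinarith
  · have hsq : m ^ ((3:ℝ)/2) = m * Real.sqrt m := by
      rw [Real.sqrt_eq_rpow, show (3:ℝ)/2 = 1 + 1/2 by norm_num, Real.rpow_add hm0,
        Real.rpow_one]
    have h1 : 2 / c < Real.sqrt m := by
      rw [show (2/c)^2 = (2/c)*(2/c) by ring] at hc1
      nlinarith [Real.sq_sqrt hm0.le, Real.sqrt_nonneg m]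
    have h2 : 2 * m ≤ m ^ ((3:ℝ)/2) * c := by
      rw [hsq]
      have := mul_lt_mul_of_pos_left h1 (mul_pos hm0 hc)
      calc 2 * m = (m * c) * (2 / c) := by field_simp
        _ ≤ (m * c) * Real.sqrt m := by nlinarith
        _ = m * Real.sqrt m * c := by ring
    nlinarith

set_option maxHeartbeats 2000000 in
theorem statement7 {n : ℕ} (p : ℝ) (hp : 0 < p) (μ : Measure (En n))
    [IsProbabilityMeasure μ] (hmom : Integrable (fun x : En n => ‖x‖) μ)
    (hbary : (∫ x, x ∂μ) = (0 : En n))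
    (h0 : (0 : En n) ∈ interior (convexHull ℝ (msupport μ))) :
    ∃ C : ℝ, ∀ ψ : En n → EReal,
      EConvexOn ψ → LowerSemicontinuous ψ → (∀ x, ψ x ≠ ⊥) → (∃ x, ψ x ≠ ⊤) →
      ψ 0 < 0 → Integrable (fun x => (ψ x).toReal) μ → (∀ᵐ x ∂μ, ψ x ≠ ⊤) →
      ((C : ℝ) : EReal) ≤ Imup n p μ ψ := by
  have hp0 : p ≠ 0 := hp.ne'
  have hexp_neg : -(2:ℝ) / p < 0 := div_neg_of_neg_of_pos (by norm_num) hp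
  obtain ⟨r, δ, hr, hδ, hA⟩ := lemA μ h0
  set q : ℝ := (n : ℝ) + p / 4 with hqdef
  have hq' : (Module.finrank ℝ (En n) : ℝ) < q := by
    rw [finrank_euclideanSpace_fin]
    simp only [hqdef]
    linarith
  set κ : ℝ := 1 + 2 / δ with hκdef
  have hκ : 1 < κ := by
    have : 0 < 2 / δ := by positivity
    simp only [hκdef]; linarith
  have hκ0 : 0 < κ := by linarith
  set a₀ : ℝ := r / (r + κ) with ha₀def
  have ha₀ : 0 < a₀ := by positivity
  -- K and its finiteness
  set K : ℝ≥0∞ := ∫⁻ z : En n, ENNReal.ofReal ((a₀ * (1 + ‖z‖)) ^ (-q)) with hKdef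
  have hK : K ≠ ⊤ := by
    have hint1 : Integrable (fun z : En n => (1 + ‖z‖) ^ (-q)) volume :=
      integrable_one_add_norm hq'
    have heq : ∀ z : En n, ENNReal.ofReal ((a₀ * (1 + ‖z‖)) ^ (-q))
        = ENNReal.ofReal (a₀ ^ (-q)) * ENNReal.ofReal ((1 + ‖z‖) ^ (-q)) := by
      intro z
      rw [Real.mul_rpow ha₀.le (by positivity), ENNReal.ofReal_mul (by positivity)]
    rw [hKdef]
    simp_rw [heq]
    rw [lintegral_const_mul' _ _ ENNReal.ofReal_ne_top]
    refine ENNReal.mul_ne_top ENNReal.ofReal_ne_top ?_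
    have h2 := hint1.hasFiniteIntegral
    rw [HasFiniteIntegral] at h2
    have h3 : ∀ z : En n, ‖(1 + ‖z‖) ^ (-q)‖ₑ = ENNReal.ofReal ((1 + ‖z‖) ^ (-q)) := by
      intro z
      rw [← Real.enorm_eq_ofReal (by positivity)]
    simp_rw [h3] at h2
    exact h2.ne
  set EK : ℝ≥0∞ := K ^ (-(2:ℝ) / p) with hEKdef
  have hEK : 0 < EK := by
    rcases eq_or_ne K 0 with h | h
    · rw [hEKdef, h, ENNReal.zero_rpow_of_neg hexp_neg]; exact ENNReal.zero_lt_top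
    · exact ENNReal.rpow_pos (h.bot_lt) hK
  set c₆ : ℝ := (min EK 1).toReal with hc₆def
  have hc₆ : 0 < c₆ := by
    rw [hc₆def]
    refine ENNReal.toReal_pos ?_ ?_
    · simp only [ne_eq, min_eq_iff]
      rintro (⟨h,-⟩|⟨h,-⟩) <;> simp_all [hEK.ne']
    · exact ne_top_of_le_ne_top (by simp) (min_le_right _ _)
  have hc₆le : ENNReal.ofReal c₆ ≤ EK := by
    rw [hc₆def, ENNReal.ofReal_toReal (ne_top_of_le_ne_top (by simp) (min_le_right _ _))]
    exact min_le_left _ _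
  clear_value K EK c₆
  -- integrability of the identity and inner products
  have hid : Integrable (fun x : En n => x) μ := by
    refine ⟨continuous_id.aestronglyMeasurable, ?_⟩
    have := hmom.hasFiniteIntegral
    rw [HasFiniteIntegral] at this ⊢
    simpa using this
  have hinner : ∀ y : En n, Integrable (fun x : En n => (⟪x, y⟫ : ℝ)) μ := by
    intro y
    exact ((innerSL ℝ y).integrable_comp hid).congr
      (Eventually.of_forall fun x => by simpa using real_inner_comm x y)
  have hinner0 : ∀ y : En n, ∫ x, (⟪x, y⟫ : ℝ) ∂μ = 0 := by
    intro y
    have h1 : ∀ x : En n, (⟪x, y⟫ : ℝ) = ⟪y, x⟫ := fun x => (real_inner_comm x y).symm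
    simp_rw [h1]
    rw [integral_inner hid y, hbary, inner_zero_right]
  -- the constant
  refine ⟨-1 - (2 / c₆) ^ 2, ?_⟩
  intro ψ hconv hlsc hbot hproper hneg hint hae
  set I : ℝ := ∫ x, (ψ x).toReal ∂μ with hIdef
  set ψr : En n → ℝ := fun x => (ψ x).toReal with hψrdef
  clear_value I
  have hψ0top : ψ 0 < ⊤ := hneg.trans (by simp)
  -- legendre is never ⊥
  have hlb : ∀ y : En n, ((-(ψ 0).toReal : ℝ) : EReal) ≤ legendre ψ y := by
    intro y
    have h1 := fenchel ψ 0 y hψ0top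
    have h2 : ψ 0 = ((ψ 0).toReal : EReal) := (EReal.coe_toReal hψ0top.ne (hbot 0)).symm
    rw [inner_zero_left] at h1
    calc ((-(ψ 0).toReal : ℝ) : EReal) = ((0 - (ψ 0).toReal : ℝ) : EReal) := by norm_num
      _ = ((0 : ℝ) : EReal) - (((ψ 0).toReal : ℝ) : EReal) := by rw [EReal.coe_sub]
      _ = ((0 : ℝ) : EReal) - ψ 0 := by rw [← h2]
      _ ≤ legendre ψ y := by exact_mod_cast h1
  have hlbot : ∀ y : En n, legendre ψ y ≠ ⊥ := by
    intro y
    exact ne_bot_of_le_ne_bot (EReal.coe_ne_bot _) (hlb y)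
  -- integral lower bound from finite legendre values
  have hC : ∀ y : En n, legendre ψ y ≠ ⊤ → -(legendre ψ y).toReal ≤ I := by
    intro y hytop
    set sy : ℝ := (legendre ψ y).toReal with hsydef
    have hsy : legendre ψ y = (sy : EReal) := (EReal.coe_toReal hytop (hlbot y)).symm
    have hmono : ∀ᵐ x ∂μ, (⟪x, y⟫ : ℝ) - sy ≤ ψr x := by
      filter_upwards [hae] with x hx
      have hx' : ψ x = ((ψr x : ℝ) : EReal) := (EReal.coe_toReal hx (hbot x)).symm
      have h1 := fenchel ψ x y (lt_top_iff_ne_top.mpr hx)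
      rw [hx', hsy, ← EReal.coe_sub, EReal.coe_le_coe_iff] at h1
      linarith
    have h2 := integral_mono_ae (f := fun x : En n => (⟪x, y⟫ : ℝ) - sy) (g := ψr)
      ((hinner y).sub (integrable_const sy)) hint hmono
    rw [integral_sub (hinner y) (integrable_const sy), hinner0 y, integral_const] at h2
    simp only [probReal_univ, smul_eq_mul, one_mul] at h2
    rw [hIdef]
    linarith
  -- main case split
  rcases le_or_gt (-1 : ℝ) I with hI | hI
  · -- easy case: second term is nonnegative
    rw [Imup, show (fun x => (ψ x).toReal) = ψr from hψrdef.symm, ← hIdef]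
    refine le_trans ?_ (add_le_add_right (EReal.coe_ennreal_nonneg _) ((I : ℝ) : EReal))
    rw [add_zero]
    exact EReal.coe_le_coe_iff.mpr (by nlinarith [sq_nonneg (2/c₆)])
  -- hard case : I < -1
  by_cases hTOP : ∀ y : En n, legendre ψ y = ⊤
  · -- then the lintegral is 0 and the second term is ⊤
    have hL : (∫⁻ x, negPow (legendre ψ x) ((n : ℝ) + p)) = 0 := by
      have : ∀ x : En n, negPow (legendre ψ x) ((n : ℝ) + p) = 0 := by
        intro x; rw [negPow, if_pos (hTOP x)]
      simp_rw [this, lintegral_zero]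
    rw [Imup, hL, ENNReal.zero_rpow_of_neg hexp_neg]
    rw [show (((⊤ : ℝ≥0∞)) : EReal) = (⊤ : EReal) from rfl, EReal.coe_add_top]
    exact le_top
  push_neg at hTOP
  obtain ⟨y₁, hy₁⟩ := hTOP
  -- the infimum of the legendre transform
  set mE : EReal := ⨅ y : En n, legendre ψ y with hmEdef
  have hmE_lb : ((-I : ℝ) : EReal) ≤ mE := by
    refine le_iInf fun y => ?_
    rcases eq_or_ne (legendre ψ y) ⊤ with h | h
    · rw [h]; exact le_top
    · have h1 := hC y h
      have h2 : legendre ψ y = (((legendre ψ y).toReal : ℝ) : EReal) :=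
        (EReal.coe_toReal h (hlbot y)).symm
      rw [h2, EReal.coe_le_coe_iff]
      linarith
  have hmEtop : mE ≠ ⊤ := by
    refine ne_top_of_le_ne_top hy₁ (iInf_le _ y₁)
  have hmEbot : mE ≠ ⊥ := ne_bot_of_le_ne_bot (EReal.coe_ne_bot _) hmE_lb
  set m : ℝ := mE.toReal with hmdef
  have hmE : mE = ((m : ℝ) : EReal) := (EReal.coe_toReal hmEtop hmEbot).symm
  clear_value mE m
  have hmM : -I ≤ m := by
    rw [hmE, EReal.coe_le_coe_iff] at hmE_lb; exact hmE_lb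
  have hm1 : 1 < m := by linarith
  have hm0 : 0 < m := by linarith
  -- choose y₀ nearly attaining the infimum
  have hy₀ex : ∃ y₀ : En n, legendre ψ y₀ < ((m + 1 : ℝ) : EReal) := by
    by_contra hcon
    push_neg at hcon
    have : ((m + 1 : ℝ) : EReal) ≤ mE := by rw [hmEdef]; exact le_iInf hcon
    rw [hmE, EReal.coe_le_coe_iff] at this
    linarith
  obtain ⟨y₀, hy₀⟩ := hy₀ex
  have hy₀top : legendre ψ y₀ ≠ ⊤ := (hy₀.trans (EReal.coe_lt_top _)).ne
  set s : ℝ := (legendre ψ y₀).toReal with hsdef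
  have hy₀eq : legendre ψ y₀ = ((s : ℝ) : EReal) := (EReal.coe_toReal hy₀top (hlbot y₀)).symm
  have hs1 : m ≤ s := by
    have := iInf_le (fun y : En n => legendre ψ y) y₀
    rw [← hmEdef, hmE, hy₀eq, EReal.coe_le_coe_iff] at this
    exact this
  have hs2 : s ≤ m + 1 := by
    rw [hy₀eq, EReal.coe_lt_coe_iff] at hy₀
    linarith
  have hs0 : 0 < s := by linarith
  clear_value s
  -- the auxiliary nonnegative function h
  set h : En n → ℝ := fun x => ψr x - ⟪x, y₀⟫ + s with hhdef
  have hh_int : Integrable h μ := by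
    exact (hint.sub (hinner y₀)).add (integrable_const s)
  have hh_nn : 0 ≤ᵐ[μ] h := by
    filter_upwards [hae] with x hx
    have hx' : ψ x = ((ψr x : ℝ) : EReal) := (EReal.coe_toReal hx (hbot x)).symm
    have h1 := fenchel ψ x y₀ (lt_top_iff_ne_top.mpr hx)
    rw [hx', hy₀eq, ← EReal.coe_sub, EReal.coe_le_coe_iff] at h1
    simp only [hhdef, Pi.zero_apply]
    linarith
  have hh_val : ∫ x, h x ∂μ = I + s := by
    calc ∫ x, h x ∂μ = (∫ x, (ψr x - ⟪x, y₀⟫) ∂μ) + ∫ _, s ∂μ := by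
          exact integral_add (by exact hint.sub (hinner y₀)) (integrable_const s)
      _ = I + s := by
          rw [integral_sub hint (hinner y₀), hinner0 y₀, integral_const]
          simp [hIdef]
  have hh_le : ∫ x, h x ∂μ ≤ m := by
    rw [hh_val]; linarith
  -- Markov
  set T : ℝ := 2 * m / δ with hTdef
  have hT : 0 < T := by positivity
  clear_value T
  have hmarkov : μ {x | T < h x} ≤ ENNReal.ofReal (δ / 2) := by
    have haem : AEMeasurable (fun x => ENNReal.ofReal (h x)) μ :=
      ENNReal.measurable_ofReal.comp_aemeasurable hh_int.aemeasurable
    have h1 := mul_meas_ge_le_lintegral₀ haem (ENNReal.ofReal T)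
    have h2 : (∫⁻ x, ENNReal.ofReal (h x) ∂μ) = ENNReal.ofReal (∫ x, h x ∂μ) :=
      (ofReal_integral_eq_lintegral_ofReal hh_int hh_nn).symm
    rw [h2] at h1
    have h3 : μ {x | T < h x} ≤ μ {x | ENNReal.ofReal T ≤ ENNReal.ofReal (h x)} := by
      refine measure_mono fun x hx => ?_
      exact ENNReal.ofReal_le_ofReal (le_of_lt hx)
    refine h3.trans ?_
    have h4 : μ {x | ENNReal.ofReal T ≤ ENNReal.ofReal (h x)}
        ≤ ENNReal.ofReal (∫ x, h x ∂μ) / ENNReal.ofReal T := by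
      rw [ENNReal.le_div_iff_mul_le (Or.inl (by simpa using hT)) (Or.inl ENNReal.ofReal_ne_top),
        mul_comm]
      exact h1
    refine h4.trans ?_
    rw [← ENNReal.ofReal_div_of_pos hT]
    refine ENNReal.ofReal_le_ofReal ?_
    rw [div_le_iff₀ hT]
    calc ∫ x, h x ∂μ ≤ m := hh_le
      _ = δ / 2 * T := by rw [hTdef]; field_simp
  -- existence of good points in every direction
  have hgood : ∀ θ : En n, ‖θ‖ = 1 → ∃ x : En n, r ≤ ⟪x, θ⟫ ∧ h x ≤ T ∧ ψ x ≠ ⊤ := by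
    intro θ hθ
    by_contra hcon
    push_neg at hcon
    have hsub : {z : En n | r ≤ ⟪z, θ⟫} ⊆ {x | T < h x} ∪ {x | ψ x = ⊤} := by
      intro z hz
      rcases lt_or_ge T (h z) with h1 | h1
      · exact Or.inl h1
      · rcases eq_or_ne (ψ z) ⊤ with h2 | h2
        · exact Or.inr h2
        · exact absurd h1 (not_le.mpr (by simpa [h2] using hcon z hz))
    have hnull : μ {x | ψ x = ⊤} = 0 := by
      have := hae
      rw [ae_iff] at this
      simpa using this
    have h5 : ENNReal.ofReal δ ≤ ENNReal.ofReal (δ / 2) := by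
      calc ENNReal.ofReal δ ≤ μ {z : En n | r ≤ ⟪z, θ⟫} := hA θ hθ
        _ ≤ μ ({x | T < h x} ∪ {x | ψ x = ⊤}) := measure_mono hsub
        _ ≤ μ {x | T < h x} + μ {x | ψ x = ⊤} := measure_union_le _ _
        _ = μ {x | T < h x} := by rw [hnull, add_zero]
        _ ≤ ENNReal.ofReal (δ / 2) := hmarkov
    rw [ENNReal.ofReal_le_ofReal_iff (by positivity)] at h5
    linarith
  -- lower bound on legendre: constant m
  have hm_lb : ∀ z : En n, ((m : ℝ) : EReal) ≤ legendre ψ z := by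
    intro z
    rw [← hmE, hmEdef]
    exact iInf_le _ z
  -- growth lower bound on legendre
  have hTeq : T = (κ - 1) * m := by rw [hTdef, hκdef]; ring
  have hgrow : ∀ z : En n, ((a₀ * (1 + ‖z - y₀‖) : ℝ) : EReal) ≤ legendre ψ z := by
    intro z
    set u : ℝ := ‖z - y₀‖ with hudef
    have hu0 : 0 ≤ u := norm_nonneg _
    have e1 : a₀ * (r + κ) = r := div_mul_cancel₀ r (by positivity)
    rcases le_or_gt u (κ * m / r) with hc | hc
    · -- use the constant bound
      have hu' : u * r ≤ κ * m := (le_div_iff₀ hr).mp hc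
      have key : a₀ * (1 + u) ≤ m := by
        have c2 : a₀ * (1 + u) * (r + κ) = r * (1 + u) := by
          calc a₀ * (1 + u) * (r + κ) = a₀ * (r + κ) * (1 + u) := by ring
            _ = r * (1 + u) := by rw [e1]
        have c3 : r * (1 + u) ≤ m * (r + κ) := by nlinarith
        have c4 : a₀ * (1 + u) * (r + κ) ≤ m * (r + κ) := by rw [c2]; exact c3
        exact le_of_mul_le_mul_right c4 (by positivity)
      exact le_trans (EReal.coe_le_coe_iff.mpr key) (hm_lb z)
    · -- use the directional bound
      have hu' : κ * m ≤ r * u := by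
        rw [div_lt_iff₀ hr] at hc
        nlinarith
      have step1 : κ ≤ r * u := by nlinarith
      have hzy : z - y₀ ≠ 0 := by
        intro hzz
        rw [hudef, hzz, norm_zero] at hc
        have : 0 < κ * m / r := by positivity
        linarith
      have hun : u ≠ 0 := by
        rw [hudef]; exact norm_ne_zero_iff.mpr hzy
      set θ : En n := u⁻¹ • (z - y₀) with hθdef
      have hθ1 : ‖θ‖ = 1 := by
        rw [hθdef, norm_smul, norm_inv, norm_norm, ← hudef, inv_mul_cancel₀ hun]
      obtain ⟨x, hx1, hx2, hx3⟩ := hgood θ hθ1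
      have hrec : z - y₀ = u • θ := by
        rw [hθdef, smul_smul, mul_inv_cancel₀ hun, one_smul]
      have hinner_ge : r * u ≤ ⟪x, z - y₀⟫ := by
        rw [hrec, real_inner_smul_right]
        calc r * u = u * r := by ring
          _ ≤ u * ⟪x, θ⟫ := by
            apply mul_le_mul_of_nonneg_left hx1 hu0
      -- Fenchel at x
      have hx' : ψ x = ((ψr x : ℝ) : EReal) := (EReal.coe_toReal hx3 (hbot x)).symm
      have hfen := fenchel ψ x z (lt_top_iff_ne_top.mpr hx3)
      rw [hx', ← EReal.coe_sub] at hfen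
      refine le_trans (EReal.coe_le_coe_iff.mpr ?_) hfen
      -- real inequality : a₀ (1+u) ≤ ⟪x,z⟫ - ψr x
      have hzz : (⟪x, z⟫ : ℝ) = ⟪x, z - y₀⟫ + ⟪x, y₀⟫ := by
        rw [inner_sub_right]; ring
      have hpsix : ψr x = h x + ⟪x, y₀⟫ - s := by rw [hhdef]; ring
      have c1' : r * u / κ ≤ r * u - T := by
        rw [div_le_iff₀ hκ0, hTeq]
        nlinarith [mul_nonneg (sub_nonneg.2 hκ.le) (sub_nonneg.2 hu')]
      have c2' : a₀ * (1 + u) ≤ r * u / κ := by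
        rw [ha₀def, div_mul_eq_mul_div, div_le_div_iff₀ (by positivity) hκ0]
        nlinarith [mul_le_mul_of_nonneg_left step1 hr.le]
      have : a₀ * (1 + u) ≤ r * u - T + s - h x + h x := by
        have hs' : h x ≤ T := hx2
        nlinarith
      calc a₀ * (1 + u) ≤ r * u - T + s := by nlinarith [hx2]
        _ ≤ ⟪x, z - y₀⟫ + s - h x + h x - T := by nlinarith [hinner_ge, hx2]
        _ ≤ ⟪x, z⟫ - ψr x := by rw [hzz, hpsix]; ring_nf; nlinarith [hT]
    
  -- pointwise bound on negPow
  have hq0 : 0 < q := by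
    have : (0:ℝ) ≤ (n:ℝ) := Nat.cast_nonneg n
    rw [hqdef]; positivity
  have hpt : ∀ z : En n,
      negPow (legendre ψ z) ((n : ℝ) + p)
        ≤ ENNReal.ofReal (m ^ (-(3 * p / 4)) * (a₀ * (1 + ‖z - y₀‖)) ^ (-q)) := by
    intro z
    rcases eq_or_ne (legendre ψ z) ⊤ with htz | htz
    · rw [negPow, if_pos htz]; exact zero_le
    · have hzb : legendre ψ z = (((legendre ψ z).toReal : ℝ) : EReal) :=
        (EReal.coe_toReal htz (hlbot z)).symm
      set v : ℝ := (legendre ψ z).toReal with hvdef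
      have hv1 : m ≤ v := by
        have := hm_lb z; rw [hzb, EReal.coe_le_coe_iff] at this; exact this
      have hv2 : a₀ * (1 + ‖z - y₀‖) ≤ v := by
        have := hgrow z; rw [hzb, EReal.coe_le_coe_iff] at this; exact this
      have hv0 : 0 < v := by linarith
      have hpos' : (0 : EReal) < legendre ψ z := by rw [hzb]; exact_mod_cast hv0
      rw [negPow, if_neg htz, if_neg (not_le.mpr hpos')]
      apply ENNReal.ofReal_le_ofReal
      have hsplit : v ^ (-((n:ℝ) + p)) = v ^ (-(3 * p / 4)) * v ^ (-q) := by
        rw [← Real.rpow_add hv0]; congr 1; rw [hqdef]; ring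
      rw [hsplit]
      have b1 : v ^ (-(3 * p / 4)) ≤ m ^ (-(3 * p / 4)) :=
        Real.rpow_le_rpow_of_nonpos hm0 hv1 (by nlinarith)
      have b2 : v ^ (-q) ≤ (a₀ * (1 + ‖z - y₀‖)) ^ (-q) :=
        Real.rpow_le_rpow_of_nonpos (by positivity) hv2 (by linarith)
      exact mul_le_mul b1 b2 (Real.rpow_nonneg hv0.le _) (Real.rpow_nonneg hm0.le _)
  -- bound the lintegral
  set L : ℝ≥0∞ := ∫⁻ x, negPow (legendre ψ x) ((n : ℝ) + p) with hLdef
  have hLb : L ≤ ENNReal.ofReal (m ^ (-(3 * p / 4))) * K := by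
    rw [hLdef]
    calc ∫⁻ x, negPow (legendre ψ x) ((n:ℝ) + p)
        ≤ ∫⁻ z, ENNReal.ofReal (m ^ (-(3 * p / 4)) * (a₀ * (1 + ‖z - y₀‖)) ^ (-q)) :=
          lintegral_mono hpt
      _ = ∫⁻ z, ENNReal.ofReal (m ^ (-(3 * p / 4)))
            * ENNReal.ofReal ((a₀ * (1 + ‖z - y₀‖)) ^ (-q)) := by
          congr 1; funext z; rw [ENNReal.ofReal_mul (Real.rpow_nonneg hm0.le _)]
      _ = ENNReal.ofReal (m ^ (-(3 * p / 4)))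
            * ∫⁻ z, ENNReal.ofReal ((a₀ * (1 + ‖z - y₀‖)) ^ (-q)) :=
          lintegral_const_mul' _ _ ENNReal.ofReal_ne_top
      _ = ENNReal.ofReal (m ^ (-(3 * p / 4))) * K := by
          congr 1
          rw [hKdef]
          simp only [sub_eq_add_neg]
          exact lintegral_add_right_eq_self
            (fun z : En n => ENNReal.ofReal ((a₀ * (1 + ‖z‖)) ^ (-q))) (-y₀)
  have hmono_rpow : (ENNReal.ofReal (m ^ (-(3 * p / 4))) * K) ^ (-(2:ℝ) / p)
      ≤ L ^ (-(2:ℝ) / p) := by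
    rw [show (-(2:ℝ) / p) = -(2 / p) by ring]
    rw [ENNReal.rpow_neg, ENNReal.rpow_neg]
    exact ENNReal.inv_le_inv.mpr (ENNReal.rpow_le_rpow hLb (by positivity))
  have hsecond : ENNReal.ofReal (m ^ ((3:ℝ)/2) * c₆) ≤ L ^ (-(2:ℝ) / p) := by
    refine le_trans ?_ hmono_rpow
    rw [ENNReal.mul_rpow_of_ne_top ENNReal.ofReal_ne_top hK,
      ENNReal.ofReal_rpow_of_pos (Real.rpow_pos_of_pos hm0 _), ← Real.rpow_mul hm0.le,
      show (-(3 * p / 4)) * (-(2:ℝ) / p) = (3:ℝ)/2 by field_simp; ring,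
      ENNReal.ofReal_mul (by positivity)]
    exact mul_le_mul_right (hEKdef ▸ hc₆le) _
  -- final assembly
  rw [Imup, show (fun x => (ψ x).toReal) = ψr from hψrdef.symm, ← hIdef, ← hLdef]
  have hstep : ((I + m ^ ((3:ℝ)/2) * c₆ : ℝ) : EReal)
      ≤ (I : EReal) + ((L ^ (-(2:ℝ) / p) : ℝ≥0∞) : EReal) := by
    rw [EReal.coe_add]
    refine add_le_add_right ?_ _
    calc ((m ^ ((3:ℝ)/2) * c₆ : ℝ) : EReal)
        ≤ ((ENNReal.ofReal (m ^ ((3:ℝ)/2) * c₆) : ℝ≥0∞) : EReal) := by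
          rw [EReal.coe_ennreal_ofReal]
          exact EReal.coe_le_coe_iff.mpr (le_max_left _ _)
      _ ≤ _ := EReal.coe_ennreal_le_coe_ennreal_iff.mpr hsecond
  refine le_trans (EReal.coe_le_coe_iff.mpr ?_) hstep
  have hfin := realfin hc₆ hm1.le
  linarith
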